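/- Let R be a commutative ring with identity, M a finitely generated multiplication R-module, and N a radical submodule of M (i.e., N is proper and rad(N) = N). Then the following are equivalent: (a) N is a strongly 2-irreducible submodule of M; (b) N is a 2-absorbing submodule of M; (c) N is a 2-absorbing primary submodule of M; (d) N is either a prime submodule of M or N = P₁ ∩ P₂ for some prime submodules P₁, P₂ of M. -/
import Mathlib


def IsStrongly2Irreducible {R M : Type*} [CommRing R] [AddCommGroup M] [Module R M]
    (N : Submodule R M) : Prop :=
  N ≠ ⊤ ∧ ∀ H₁ H₂ H₃ : Submodule R M, H₁ ⊓ H₂ ⊓ H₃ ≤ N →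
    H₁ ⊓ H₂ ≤ N ∨ H₁ ⊓ H₃ ≤ N ∨ H₂ ⊓ H₃ ≤ N

def IsMultiplicationModule (R M : Type*) [CommRing R] [AddCommGroup M] [Module R M] : Prop :=
  ∀ N : Submodule R M, ∃ I : Ideal R, N = I • (⊤ : Submodule R M)

def IsPrimeSubmodule {R M : Type*} [CommRing R] [AddCommGroup M] [Module R M]
    (P : Submodule R M) : Prop :=
  P ≠ ⊤ ∧ ∀ (r : R) (m : M), r • m ∈ P → m ∈ P ∨ r ∈ P.colon ⊤

def radSubmodule {R M : Type*} [CommRing R] [AddCommGroup M] [Module R M]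
    (N : Submodule R M) : Submodule R M :=
  sInf {P : Submodule R M | IsPrimeSubmodule P ∧ N ≤ P}

def Is2Absorbing {R M : Type*} [CommRing R] [AddCommGroup M] [Module R M]
    (N : Submodule R M) : Prop :=
  N ≠ ⊤ ∧ ∀ (a b : R) (m : M), (a * b) • m ∈ N →
    a • m ∈ N ∨ b • m ∈ N ∨ a * b ∈ N.colon ⊤

def Is2AbsorbingPrimary {R M : Type*} [CommRing R] [AddCommGroup M] [Module R M]
    (N : Submodule R M) : Prop :=
  N ≠ ⊤ ∧ ∀ (a b : R) (m : M), (a * b) • m ∈ N →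
    a • m ∈ radSubmodule N ∨ b • m ∈ radSubmodule N ∨ a * b ∈ N.colon ⊤

section RingAux

variable {R : Type*} [CommRing R]

/-- The "2-absorbing" condition for the colon ideal, in symmetric form. -/
def J2 (J : Ideal R) : Prop :=
  ∀ a b c : R, a * b * c ∈ J → a * b ∈ J ∨ a * c ∈ J ∨ b * c ∈ J

/-- Elementwise characterization of minimal primes over a radical ideal. -/
lemma minPrime_elt {J p : Ideal R} (hradJ : J.radical = J) (hp : p ∈ J.minimalPrimes)
    {x : R} (hx : x ∈ p) : ∃ s, s ∉ p ∧ s * x ∈ J := by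
  have hpprime : p.IsPrime := hp.1.1
  by_contra hcon
  push_neg at hcon
  -- the multiplicative set {s * x^n : s ∉ p}
  set S : Submonoid R :=
    { carrier := {r | ∃ s, s ∉ p ∧ ∃ n : ℕ, r = s * x ^ n}
      one_mem' := ⟨1, (Ideal.ne_top_iff_one p).mp hpprime.ne_top, 0, by ring⟩
      mul_mem' := by
        rintro r₁ r₂ ⟨s, hs, n, rfl⟩ ⟨t, ht, m, rfl⟩
        refine ⟨s * t, fun h => (hpprime.mem_or_mem h).elim hs ht, n + m, by ring⟩ } with hS
  have hdisj : Disjoint (J : Set R) (S : Set R) := by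
    rw [Set.disjoint_left]
    rintro r hrJ ⟨s, hs, n, rfl⟩
    -- s * x ^ n ∈ J implies s * x ∈ J (n ≥ 1) or s ∈ J (n = 0), both contradictions
    rcases Nat.eq_zero_or_pos n with hn | hn
    · subst hn
      simp only [pow_zero, mul_one] at hrJ
      exact hs (hp.1.2 hrJ)
    · apply hcon s hs
      rw [← hradJ]
      refine ⟨n, ?_⟩
      have : (s * x) ^ n = s ^ (n - 1) * (s * x ^ n) := by
        rw [mul_pow]
        rw [show s ^ n = s ^ (n-1) * s by rw [← pow_succ]; congr 1; omega]
        ring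
      rw [this]
      exact J.mul_mem_left _ hrJ
  obtain ⟨q, hqprime, hJq, hqdisj⟩ := Ideal.exists_le_prime_disjoint J S hdisj
  have hqp : q ≤ p := by
    intro z hz
    by_contra hzp
    exact (Set.disjoint_left.mp hqdisj hz) ⟨z, hzp, 0, by ring⟩
  have hpq : p ≤ q := hp.2 ⟨hqprime, hJq⟩ hqp
  exact (Set.disjoint_left.mp hqdisj (hpq hx)) ⟨1, (Ideal.ne_top_iff_one p).mp hpprime.ne_top, 1,
    by ring⟩

/-- Key lemma: for a radical 2-absorbing ideal, the product of two distinct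
minimal primes is contained in the ideal. -/
lemma star {J p₁ p₂ : Ideal R} (hradJ : J.radical = J) (hJ2 : J2 J)
    (hp₁ : p₁ ∈ J.minimalPrimes) (hp₂ : p₂ ∈ J.minimalPrimes) (hne : p₁ ≠ p₂) :
    ∀ a ∈ p₁, ∀ b ∈ p₂, a * b ∈ J := by
  have hprime₁ : p₁.IsPrime := hp₁.1.1
  have hprime₂ : p₂.IsPrime := hp₂.1.1
  have hnle₁ : ¬p₁ ≤ p₂ := fun h => hne (le_antisymm h (hp₂.2 ⟨hprime₁, hp₁.1.2⟩ h))
  have hnle₂ : ¬p₂ ≤ p₁ := fun h => hne (le_antisymm (hp₁.2 ⟨hprime₂, hp₂.1.2⟩ h) h)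
  obtain ⟨x, hx₁, hx₂⟩ := SetLike.not_le_iff_exists.mp hnle₁
  obtain ⟨y, hy₂, hy₁⟩ := SetLike.not_le_iff_exists.mp hnle₂
  -- Step 1
  have step1 : ∀ u ∈ p₁, u ∉ p₂ → ∀ v ∈ p₂, v ∉ p₁ → u * v ∈ J := by
    intro u hu₁ hu₂ v hv₂ hv₁
    obtain ⟨s, hs, hsu⟩ := minPrime_elt hradJ hp₁ hu₁
    obtain ⟨t, ht, htv⟩ := minPrime_elt hradJ hp₂ hv₂
    have hs₂ : s ∈ p₂ := ((hprime₂.mem_or_mem (hp₂.1.2 hsu)).resolve_right hu₂)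
    have ht₁ : t ∈ p₁ := ((hprime₁.mem_or_mem (hp₁.1.2 htv)).resolve_right hv₁)
    have hkey : u * v * (s + t) ∈ J := by
      have h1 : u * v * (s + t) = v * (s * u) + u * (t * v) := by ring
      rw [h1]
      exact J.add_mem (J.mul_mem_left _ hsu) (J.mul_mem_left _ htv)
    rcases hJ2 u v (s + t) hkey with h | h | h
    · exact h
    · exfalso
      have hut : u * t ∈ J := by
        have : u * t = u * (s + t) - s * u := by ring
        rw [this]
        exact J.sub_mem h hsu
      exact absurd (hp₂.1.2 hut) (fun hm => (hprime₂.mem_or_mem hm).elim hu₂ ht)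
    · exfalso
      have hvs : v * s ∈ J := by
        have : v * s = v * (s + t) - t * v := by ring
        rw [this]
        exact J.sub_mem h htv
      exact absurd (hp₁.1.2 hvs) (fun hm => (hprime₁.mem_or_mem hm).elim hv₁ hs)
  intro a ha₁ b hb₂
  have hxy : x * y ∈ J := step1 x hx₁ hx₂ y hy₂ hy₁
  by_cases hap₂ : a ∈ p₂ <;> by_cases hbp₁ : b ∈ p₁
  · -- a ∈ p₁ ∩ p₂, b ∈ p₁ ∩ p₂
    have h1 : (a + x) * (b + y) ∈ J :=
      step1 (a + x) (p₁.add_mem ha₁ hx₁) (fun h => hx₂ (by simpa using p₂.sub_mem h hap₂))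
        (b + y) (p₂.add_mem hb₂ hy₂) (fun h => hy₁ (by simpa using p₁.sub_mem h hbp₁))
    have h2 : (a + x) * y ∈ J :=
      step1 (a + x) (p₁.add_mem ha₁ hx₁) (fun h => hx₂ (by simpa using p₂.sub_mem h hap₂))
        y hy₂ hy₁
    have h3 : x * (b + y) ∈ J :=
      step1 x hx₁ hx₂ (b + y) (p₂.add_mem hb₂ hy₂)
        (fun h => hy₁ (by simpa using p₁.sub_mem h hbp₁))
    have : a * b = (a + x) * (b + y) - (a + x) * y - x * (b + y) + x * y := by ring
    rw [this]
    exact J.add_mem (J.sub_mem (J.sub_mem h1 h2) h3) hxy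
  · -- a ∈ p₁ ∩ p₂, b ∉ p₁
    have h1 : (a + x) * b ∈ J :=
      step1 (a + x) (p₁.add_mem ha₁ hx₁) (fun h => hx₂ (by simpa using p₂.sub_mem h hap₂))
        b hb₂ hbp₁
    have h2 : x * b ∈ J := step1 x hx₁ hx₂ b hb₂ hbp₁
    have : a * b = (a + x) * b - x * b := by ring
    rw [this]
    exact J.sub_mem h1 h2
  · -- a ∉ p₂, b ∈ p₁ ∩ p₂
    have h1 : a * (b + y) ∈ J :=
      step1 a ha₁ hap₂ (b + y) (p₂.add_mem hb₂ hy₂)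
        (fun h => hy₁ (by simpa using p₁.sub_mem h hbp₁))
    have h2 : a * y ∈ J := step1 a ha₁ hap₂ y hy₂ hy₁
    have : a * b = a * (b + y) - a * y := by ring
    rw [this]
    exact J.sub_mem h1 h2
  · exact step1 a ha₁ hap₂ b hb₂ hbp₁

end RingAux

section ModAux

variable {R M : Type*} [CommRing R] [AddCommGroup M] [Module R M]

lemma mem_colon_top {K : Submodule R M} {r : R} :
    r ∈ K.colon ⊤ ↔ ∀ m : M, r • m ∈ K := by
  rw [Submodule.mem_colon]
  exact ⟨fun h m => h m trivial, fun h m _ => h m⟩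

lemma colon_top_ne_top {K : Submodule R M} (hK : K ≠ ⊤) : K.colon ⊤ ≠ ⊤ := by
  intro h
  apply hK
  rw [eq_top_iff]
  intro m _
  have : (1 : R) ∈ K.colon ⊤ := h ▸ trivial
  simpa using mem_colon_top.mp this m

lemma colon_top_prime {P : Submodule R M} (hP : IsPrimeSubmodule P) :
    (P.colon ⊤).IsPrime := by
  constructor
  · exact colon_top_ne_top hP.1
  · intro a b hab
    by_cases ha : a ∈ P.colon ⊤
    · exact Or.inl ha
    · refine Or.inr (mem_colon_top.mpr fun m => ?_)
      have habm : a • (b • m) ∈ P := by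
        rw [smul_smul]
        exact mem_colon_top.mp hab m
      rcases hP.2 a (b • m) habm with h | h
      · exact h
      · exact absurd h ha

lemma prime_of_colon_prime (hmul : IsMultiplicationModule R M) {K : Submodule R M}
    (hK : K ≠ ⊤) (h : (K.colon ⊤).IsPrime) : IsPrimeSubmodule K := by
  refine ⟨hK, fun r m hrm => ?_⟩
  by_cases hr : r ∈ K.colon ⊤
  · exact Or.inr hr
  left
  obtain ⟨I, hI⟩ := hmul (Submodule.span R {m})
  have hIK : I ≤ K.colon ⊤ := by
    intro i hi
    have hri : r * i ∈ K.colon ⊤ := by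
      rw [mem_colon_top]
      intro m'
      have him' : i • m' ∈ Submodule.span R {m} := by
        rw [hI]
        exact Submodule.smul_mem_smul hi trivial
      obtain ⟨s, hs⟩ := Submodule.mem_span_singleton.mp him'
      have : (r * i) • m' = s • (r • m) := by
        calc (r * i) • m' = r • (i • m') := by rw [mul_smul]
          _ = r • (s • m) := by rw [← hs]
          _ = s • (r • m) := smul_comm r s m
      rw [this]
      exact K.smul_mem s hrm
    exact (h.mem_or_mem hri).resolve_left hr
  have hm : m ∈ Submodule.span R {m} := Submodule.mem_span_singleton_self m
  rw [hI] at hm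
  have : I • (⊤ : Submodule R M) ≤ K := by
    rw [Submodule.smul_le]
    intro i hi m' _
    exact mem_colon_top.mp (hIK hi) m'
  exact this hm

lemma prime_strongly_irred (hmul : IsMultiplicationModule R M) {P H₁ H₂ : Submodule R M}
    (hP : IsPrimeSubmodule P) (h : H₁ ⊓ H₂ ≤ P) : H₁ ≤ P ∨ H₂ ≤ P := by
  obtain ⟨I₁, hI₁⟩ := hmul H₁
  obtain ⟨I₂, hI₂⟩ := hmul H₂
  have hprod : I₁ * I₂ ≤ P.colon ⊤ := by
    rw [Ideal.mul_le]
    intro r hr s hs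
    rw [mem_colon_top]
    intro m
    have h1 : (r * s) • m ∈ H₁ := by
      rw [hI₁, mul_smul]
      exact Submodule.smul_mem_smul hr trivial
    have h2 : (r * s) • m ∈ H₂ := by
      rw [hI₂, mul_comm, mul_smul]
      exact Submodule.smul_mem_smul hs trivial
    exact h ⟨h1, h2⟩
  have hcolon : P.colon ⊤ • (⊤ : Submodule R M) ≤ P := by
    rw [Submodule.smul_le]
    intro r hr m _
    exact mem_colon_top.mp hr m
  rcases (colon_top_prime hP).mul_le.mp hprod with h' | h'
  · left
    rw [hI₁]
    exact le_trans (Submodule.smul_mono_left h') hcolon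
  · right
    rw [hI₂]
    exact le_trans (Submodule.smul_mono_left h') hcolon

lemma smul_mem_iff_forall (hmul : IsMultiplicationModule R M) {N : Submodule R M}
    {m : M} {I : Ideal R} (hI : Submodule.span R {m} = I • (⊤ : Submodule R M)) (r : R) :
    r • m ∈ N ↔ ∀ i ∈ I, r * i ∈ N.colon ⊤ := by
  constructor
  · intro hrm i hi
    rw [mem_colon_top]
    intro m'
    have him' : i • m' ∈ Submodule.span R {m} := by
      rw [hI]
      exact Submodule.smul_mem_smul hi trivial
    obtain ⟨s, hs⟩ := Submodule.mem_span_singleton.mp him'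
    have : (r * i) • m' = s • (r • m) := by
      calc (r * i) • m' = r • (i • m') := by rw [mul_smul]
        _ = r • (s • m) := by rw [← hs]
        _ = s • (r • m) := smul_comm r s m
    rw [this]
    exact N.smul_mem s hrm
  · intro hall
    have hm : m ∈ I • (⊤ : Submodule R M) := by
      rw [← hI]; exact Submodule.mem_span_singleton_self m
    have key : ∀ x ∈ I • (⊤ : Submodule R M), r • x ∈ N := by
      intro x hx
      refine Submodule.smul_induction_on hx ?_ ?_
      · intro i hi m' _
        have : r • i • m' = (r * i) • m' := by rw [smul_smul]
        rw [this]
        exact mem_colon_top.mp (hall i hi) m'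
      · intro x y hx hy
        rw [smul_add]
        exact N.add_mem hx hy
    exact key m hm

end ModAux

section Main

variable {R M : Type*} [CommRing R] [AddCommGroup M] [Module R M]

lemma colon_mono {K L : Submodule R M} (h : K ≤ L) : K.colon ⊤ ≤ L.colon ⊤ := by
  intro r hr
  rw [mem_colon_top]
  exact fun m => h (mem_colon_top.mp hr m)

/-- (a) implies the colon ideal is 2-absorbing. -/
lemma J2_of_strongly2irred {N : Submodule R M} (hrad : radSubmodule N = N)
    (h : IsStrongly2Irreducible N) : J2 (N.colon ⊤) := by
  intro a b c habc
  by_contra hcon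
  push_neg at hcon
  obtain ⟨hab, hac, hbc⟩ := hcon
  set S : Set (Submodule R M) := {P | IsPrimeSubmodule P ∧ N ≤ P} with hSdef
  set Sa : Set (Submodule R M) := {P ∈ S | a ∈ P.colon ⊤} with hSa
  set Sb : Set (Submodule R M) := {P ∈ S | a ∉ P.colon ⊤ ∧ b ∈ P.colon ⊤} with hSb
  set Sc : Set (Submodule R M) := {P ∈ S | a ∉ P.colon ⊤ ∧ b ∉ P.colon ⊤ ∧ c ∈ P.colon ⊤}
    with hSc
  have hcover : S = Sa ∪ Sb ∪ Sc := by
    ext P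
    simp only [hSa, hSb, hSc, Set.mem_union, Set.mem_setOf_eq, Set.mem_sep_iff]
    constructor
    · intro hP
      by_cases ha : a ∈ P.colon ⊤
      · exact Or.inl (Or.inl ⟨hP, ha⟩)
      by_cases hb : b ∈ P.colon ⊤
      · exact Or.inl (Or.inr ⟨hP, ha, hb⟩)
      have hPprime := colon_top_prime hP.1
      have habcP : a * b * c ∈ P.colon ⊤ := colon_mono hP.2 habc
      have hc : c ∈ P.colon ⊤ := by
        rcases hPprime.mem_or_mem habcP with h' | h'
        · exact absurd ((hPprime.mem_or_mem h').resolve_left ha) hb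
        · exact h'
      exact Or.inr ⟨hP, ha, hb, hc⟩
    · rintro ((⟨hP, _⟩ | ⟨hP, _⟩) | ⟨hP, _⟩) <;> exact hP
  set A : Submodule R M := sInf Sa with hA
  set B : Submodule R M := sInf Sb with hB
  set C : Submodule R M := sInf Sc with hC
  have hABC : A ⊓ B ⊓ C ≤ N := by
    have : A ⊓ B ⊓ C = sInf S := by
      rw [hcover, sInf_union, sInf_union]
    rw [this, hSdef]
    rw [show sInf {P : Submodule R M | IsPrimeSubmodule P ∧ N ≤ P} = radSubmodule N from rfl,
      hrad]
  have haA : ∀ m : M, a • m ∈ A := by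
    intro m
    rw [hA, Submodule.mem_sInf]
    rintro P ⟨_, haP⟩
    exact mem_colon_top.mp haP m
  have hbB : ∀ m : M, b • m ∈ B := by
    intro m
    rw [hB, Submodule.mem_sInf]
    rintro P ⟨_, _, hbP⟩
    exact mem_colon_top.mp hbP m
  have hcC : ∀ m : M, c • m ∈ C := by
    intro m
    rw [hC, Submodule.mem_sInf]
    rintro P ⟨_, _, _, hcP⟩
    exact mem_colon_top.mp hcP m
  rcases h.2 A B C hABC with h' | h' | h'
  · apply hab
    rw [mem_colon_top]
    intro m
    refine h' ⟨?_, ?_⟩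
    · have : (a * b) • m = a • (b • m) := by rw [smul_smul]
      rw [this]; exact haA _
    · have : (a * b) • m = b • (a • m) := by rw [mul_comm, mul_smul]
      rw [this]; exact hbB _
  · apply hac
    rw [mem_colon_top]
    intro m
    refine h' ⟨?_, ?_⟩
    · have : (a * c) • m = a • (c • m) := by rw [smul_smul]
      rw [this]; exact haA _
    · have : (a * c) • m = c • (a • m) := by rw [mul_comm, mul_smul]
      rw [this]; exact hcC _
  · apply hbc
    rw [mem_colon_top]
    intro m
    refine h' ⟨?_, ?_⟩
    · have : (b * c) • m = b • (c • m) := by rw [smul_smul]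
      rw [this]; exact hbB _
    · have : (b * c) • m = c • (b • m) := by rw [mul_comm, mul_smul]
      rw [this]; exact hcC _

/-- (b) implies the colon ideal is 2-absorbing. -/
lemma J2_of_2absorbing {N : Submodule R M} (h : Is2Absorbing N) : J2 (N.colon ⊤) := by
  intro a b c habc
  by_contra hcon
  push_neg at hcon
  obtain ⟨hab, hac, hbc⟩ := hcon
  rw [mem_colon_top] at hac hbc
  push_neg at hac hbc
  obtain ⟨m₁, hm₁⟩ := hac
  obtain ⟨m₂, hm₂⟩ := hbc
  have key : ∀ m : M, (a * b) • (c • m) ∈ N := by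
    intro m
    rw [smul_smul]
    exact mem_colon_top.mp habc m
  have h1 : (b * c) • m₁ ∈ N := by
    rcases h.2 a b (c • m₁) (key m₁) with h' | h' | h'
    · exact absurd (by rwa [smul_smul] at h') hm₁
    · rwa [smul_smul] at h'
    · exact absurd h' hab
  have h2 : (a * c) • m₂ ∈ N := by
    rcases h.2 a b (c • m₂) (key m₂) with h' | h' | h'
    · rwa [smul_smul] at h'
    · exact absurd (by rwa [smul_smul] at h') hm₂
    · exact absurd h' hab
  rcases h.2 a b (c • (m₁ + m₂)) (key (m₁ + m₂)) with h' | h' | h'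
  · rw [smul_smul, smul_add] at h'
    exact hm₁ (by simpa using N.sub_mem h' h2)
  · rw [smul_smul, smul_add] at h'
    exact hm₂ (by simpa using N.sub_mem h' h1)
  · exact absurd h' hab

/-- The colon ideal being 2-absorbing implies (b). -/
lemma twoabsorbing_of_J2 (hmul : IsMultiplicationModule R M) {N : Submodule R M}
    (hN : N ≠ ⊤) (hJ : J2 (N.colon ⊤)) : Is2Absorbing N := by
  refine ⟨hN, fun a b m habm => ?_⟩
  by_cases hab : a * b ∈ N.colon ⊤
  · exact Or.inr (Or.inr hab)
  by_cases ham : a • m ∈ N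
  · exact Or.inl ham
  refine Or.inr (Or.inl ?_)
  obtain ⟨I, hI⟩ := hmul (Submodule.span R {m})
  have hIab : ∀ i ∈ I, a * b * i ∈ N.colon ⊤ := (smul_mem_iff_forall hmul hI (a * b)).mp habm
  have hIa : ¬∀ i ∈ I, a * i ∈ N.colon ⊤ := fun h => ham ((smul_mem_iff_forall hmul hI a).mpr h)
  push_neg at hIa
  obtain ⟨i₀, hi₀I, hi₀⟩ := hIa
  rw [smul_mem_iff_forall hmul hI b]
  have hbi₀ : b * i₀ ∈ N.colon ⊤ := by
    rcases hJ a b i₀ (hIab i₀ hi₀I) with h' | h' | h'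
    · exact absurd h' hab
    · exact absurd h' hi₀
    · exact h'
  intro i hiI
  by_cases hai : a * i ∈ N.colon ⊤
  · rcases hJ a b (i + i₀) (hIab _ (I.add_mem hiI hi₀I)) with h' | h' | h'
    · exact absurd h' hab
    · exfalso
      apply hi₀
      have : a * i₀ = a * (i + i₀) - a * i := by ring
      rw [this]
      exact (N.colon ⊤).sub_mem h' hai
    · have : b * i = b * (i + i₀) - b * i₀ := by ring
      rw [this]
      exact (N.colon ⊤).sub_mem h' hbi₀
  · rcases hJ a b i (hIab i hiI) with h' | h' | h'
    · exact absurd h' hab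
    · exact absurd h' hai
    · exact h'

/-- The colon ideal being 2-absorbing implies (d). -/
lemma d_of_J2 (hmul : IsMultiplicationModule R M) {N : Submodule R M}
    (hN : N ≠ ⊤) (hrad : radSubmodule N = N) (hJ : J2 (N.colon ⊤)) :
    IsPrimeSubmodule N ∨
      ∃ P₁ P₂ : Submodule R M, IsPrimeSubmodule P₁ ∧ IsPrimeSubmodule P₂ ∧ N = P₁ ⊓ P₂ := by
  set J : Ideal R := N.colon ⊤ with hJdef
  set S : Set (Submodule R M) := {P | IsPrimeSubmodule P ∧ N ≤ P} with hSdef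
  have hJtop : J ≠ ⊤ := colon_top_ne_top hN
  have hJcap : ∀ x : R, (∀ P ∈ S, x ∈ P.colon ⊤) → x ∈ J := by
    intro x hx
    rw [hJdef, mem_colon_top]
    intro m
    have : x • m ∈ radSubmodule N := by
      rw [radSubmodule, Submodule.mem_sInf]
      intro P hP
      exact mem_colon_top.mp (hx P hP) m
    rwa [hrad] at this
  have hradJ : J.radical = J := by
    refine le_antisymm ?_ Ideal.le_radical
    intro x hx
    apply hJcap
    intro P hP
    have hprime := colon_top_prime hP.1
    have : J ≤ P.colon ⊤ := colon_mono hP.2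
    exact hprime.radical_le_iff.mpr this hx
  -- a minimal prime exists
  obtain ⟨mx, hmx, hJmx⟩ := Ideal.exists_le_maximal J hJtop
  have : mx.IsPrime := hmx.isPrime
  obtain ⟨p₀, hp₀, _⟩ := Ideal.exists_minimalPrimes_le hJmx
  by_cases huniq : ∀ p ∈ J.minimalPrimes, ∀ q ∈ J.minimalPrimes, p = q
  · -- J is prime
    left
    have hJp : J = p₀ := by
      have h1 : sInf J.minimalPrimes = J.radical := Ideal.sInf_minimalPrimes
      have h2 : J.minimalPrimes = {p₀} := by
        ext q
        constructor
        · intro hq; exact huniq q hq p₀ hp₀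
        · rintro rfl; exact hp₀
      rw [h2, sInf_singleton, hradJ] at h1
      exact h1.symm
    exact prime_of_colon_prime hmul hN (by rw [← hJdef, hJp]; exact hp₀.1.1)
  · push_neg at huniq
    obtain ⟨p₁, hp₁, p₂, hp₂, hpne⟩ := huniq
    have hstar := star hradJ hJ hp₁ hp₂ hpne
    have hprime₁ : p₁.IsPrime := hp₁.1.1
    have hprime₂ : p₂.IsPrime := hp₂.1.1
    have hp₁p₂J : p₁ * p₂ ≤ J := Ideal.mul_le.mpr hstar
    set S₁ : Set (Submodule R M) := {P ∈ S | p₁ ≤ P.colon ⊤} with hS₁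
    set S₂ : Set (Submodule R M) := {P ∈ S | p₂ ≤ P.colon ⊤} with hS₂
    have hcover : S = S₁ ∪ S₂ := by
      ext P
      simp only [hS₁, hS₂, Set.mem_union, Set.mem_sep_iff]
      constructor
      · intro hP
        have hprime := colon_top_prime hP.1
        have : p₁ * p₂ ≤ P.colon ⊤ := le_trans hp₁p₂J (colon_mono hP.2)
        rcases hprime.mul_le.mp this with h' | h'
        · exact Or.inl ⟨hP, h'⟩
        · exact Or.inr ⟨hP, h'⟩
      · rintro (⟨hP, _⟩ | ⟨hP, _⟩) <;> exact hP
    set A₁ : Submodule R M := sInf S₁ with hA₁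
    set A₂ : Submodule R M := sInf S₂ with hA₂
    have hinf : A₁ ⊓ A₂ = N := by
      rw [hA₁, hA₂, ← sInf_union, ← hcover, hSdef]
      exact hrad
    have hgeq₁ : p₁ ≤ A₁.colon ⊤ := by
      intro x hx
      rw [mem_colon_top]
      intro m
      rw [hA₁, Submodule.mem_sInf]
      rintro P ⟨_, hle⟩
      exact mem_colon_top.mp (hle hx) m
    have hgeq₂ : p₂ ≤ A₂.colon ⊤ := by
      intro x hx
      rw [mem_colon_top]
      intro m
      rw [hA₂, Submodule.mem_sInf]
      rintro P ⟨_, hle⟩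
      exact mem_colon_top.mp (hle hx) m
    have hnle₁ : ¬p₂ ≤ p₁ := fun h => hpne (le_antisymm (hp₁.2 ⟨hprime₂, hp₂.1.2⟩ h) h)
    have hnle₂ : ¬p₁ ≤ p₂ := fun h => hpne (le_antisymm h (hp₂.2 ⟨hprime₁, hp₁.1.2⟩ h))
    obtain ⟨y, hy₂, hy₁⟩ := SetLike.not_le_iff_exists.mp hnle₁
    obtain ⟨x, hx₁, hx₂⟩ := SetLike.not_le_iff_exists.mp hnle₂
    have hcolA₁ : A₁.colon ⊤ = p₁ := by
      refine le_antisymm ?_ hgeq₁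
      intro z hz
      have hzy : z * y ∈ J := by
        rw [hJdef, mem_colon_top]
        intro m
        have h1 : (z * y) • m ∈ A₁ := by
          rw [mul_smul]
          exact mem_colon_top.mp hz (y • m)
        have h2 : (z * y) • m ∈ A₂ := by
          rw [mul_comm, mul_smul]
          exact mem_colon_top.mp (hgeq₂ hy₂) (z • m)
        have : (z * y) • m ∈ A₁ ⊓ A₂ := ⟨h1, h2⟩
        rwa [hinf] at this
      have : z * y ∈ p₁ := hp₁.1.2 hzy
      exact (hprime₁.mem_or_mem this).resolve_right hy₁
    have hcolA₂ : A₂.colon ⊤ = p₂ := by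
      refine le_antisymm ?_ hgeq₂
      intro z hz
      have hzx : z * x ∈ J := by
        rw [hJdef, mem_colon_top]
        intro m
        have h2 : (z * x) • m ∈ A₂ := by
          rw [mul_smul]
          exact mem_colon_top.mp hz (x • m)
        have h1 : (z * x) • m ∈ A₁ := by
          rw [mul_comm, mul_smul]
          exact mem_colon_top.mp (hgeq₁ hx₁) (z • m)
        have : (z * x) • m ∈ A₁ ⊓ A₂ := ⟨h1, h2⟩
        rwa [hinf] at this
      have : z * x ∈ p₂ := hp₂.1.2 hzx
      exact (hprime₂.mem_or_mem this).resolve_right hx₂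
    have hA₁top : A₁ ≠ ⊤ := by
      intro h
      apply hprime₁.ne_top
      rw [← hcolA₁, h, eq_top_iff]
      intro r _
      rw [mem_colon_top]
      intro m
      trivial
    have hA₂top : A₂ ≠ ⊤ := by
      intro h
      apply hprime₂.ne_top
      rw [← hcolA₂, h, eq_top_iff]
      intro r _
      rw [mem_colon_top]
      intro m
      trivial
    right
    exact ⟨A₁, A₂, prime_of_colon_prime hmul hA₁top (hcolA₁ ▸ hprime₁),
      prime_of_colon_prime hmul hA₂top (hcolA₂ ▸ hprime₂), hinf.symm⟩

/-- (d) implies (a). -/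
lemma strongly2irred_of_d (hmul : IsMultiplicationModule R M) {N : Submodule R M}
    (hN : N ≠ ⊤)
    (hd : IsPrimeSubmodule N ∨
      ∃ P₁ P₂ : Submodule R M, IsPrimeSubmodule P₁ ∧ IsPrimeSubmodule P₂ ∧ N = P₁ ⊓ P₂) :
    IsStrongly2Irreducible N := by
  refine ⟨hN, fun H₁ H₂ H₃ h => ?_⟩
  have tri : ∀ P : Submodule R M, IsPrimeSubmodule P → H₁ ⊓ H₂ ⊓ H₃ ≤ P →
      H₁ ≤ P ∨ H₂ ≤ P ∨ H₃ ≤ P := by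
    intro P hP hle
    rcases prime_strongly_irred hmul hP hle with h' | h'
    · rcases prime_strongly_irred hmul hP h' with h'' | h''
      · exact Or.inl h''
      · exact Or.inr (Or.inl h'')
    · exact Or.inr (Or.inr h')
  rcases hd with hP | ⟨P₁, P₂, hP₁, hP₂, hNeq⟩
  · rcases tri N hP h with h' | h' | h'
    · exact Or.inl (le_trans inf_le_left h')
    · exact Or.inl (le_trans inf_le_right h')
    · exact Or.inr (Or.inl (le_trans inf_le_right h'))
  · have h1 : H₁ ⊓ H₂ ⊓ H₃ ≤ P₁ := le_trans h (hNeq ▸ inf_le_left)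
    have h2 : H₁ ⊓ H₂ ⊓ H₃ ≤ P₂ := le_trans h (hNeq ▸ inf_le_right)
    have hNle : ∀ K : Submodule R M, K ≤ P₁ → K ≤ P₂ → K ≤ N := by
      intro K hk1 hk2
      rw [hNeq]
      exact le_inf hk1 hk2
    rcases tri P₁ hP₁ h1 with g1 | g1 | g1 <;> rcases tri P₂ hP₂ h2 with g2 | g2 | g2
    · exact Or.inl (le_trans inf_le_left (hNle _ g1 g2))
    · exact Or.inl (hNle _ (le_trans inf_le_left g1) (le_trans inf_le_right g2))
    · exact Or.inr (Or.inl (hNle _ (le_trans inf_le_left g1) (le_trans inf_le_right g2)))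
    · exact Or.inl (hNle _ (le_trans inf_le_right g1) (le_trans inf_le_left g2))
    · exact Or.inl (le_trans inf_le_right (hNle _ g1 g2))
    · exact Or.inr (Or.inr (hNle _ (le_trans inf_le_left g1) (le_trans inf_le_right g2)))
    · exact Or.inr (Or.inl (hNle _ (le_trans inf_le_right g1) (le_trans inf_le_left g2)))
    · exact Or.inr (Or.inr (hNle _ (le_trans inf_le_right g1) (le_trans inf_le_left g2)))
    · exact Or.inr (Or.inl (le_trans inf_le_right (hNle _ g1 g2)))

end Main

theorem stmt_12 {R M : Type*} [CommRing R] [AddCommGroup M] [Module R M]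
    [Module.Finite R M] (hmul : IsMultiplicationModule R M)
    (N : Submodule R M) (hN : N ≠ ⊤) (hrad : radSubmodule N = N) :
    (IsStrongly2Irreducible N ↔ Is2Absorbing N) ∧
    (IsStrongly2Irreducible N ↔ Is2AbsorbingPrimary N) ∧
    (IsStrongly2Irreducible N ↔
      (IsPrimeSubmodule N ∨
        ∃ P₁ P₂ : Submodule R M, IsPrimeSubmodule P₁ ∧ IsPrimeSubmodule P₂ ∧ N = P₁ ⊓ P₂)) := by
  have hab : IsStrongly2Irreducible N → Is2Absorbing N := fun h =>
    twoabsorbing_of_J2 hmul hN (J2_of_strongly2irred hrad h)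
  have hba : Is2Absorbing N → IsStrongly2Irreducible N := fun h =>
    strongly2irred_of_d hmul hN (d_of_J2 hmul hN hrad (J2_of_2absorbing h))
  have hbc : Is2Absorbing N ↔ Is2AbsorbingPrimary N := by
    unfold Is2Absorbing Is2AbsorbingPrimary
    rw [hrad]
  refine ⟨⟨hab, hba⟩, ⟨fun h => hbc.mp (hab h), fun h => hba (hbc.mpr h)⟩,
    ⟨fun h => d_of_J2 hmul hN hrad (J2_of_strongly2irred hrad h),
      strongly2irred_of_d hmul hN⟩⟩
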